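/- Generalized fidelity does not decrease under projections: for subnormalized states ρ, σ and a projection Π, F(ΠρΠ, ΠσΠ) ≥ F(ρ,σ) − sqrt((1−Tr(Πρ))(1−Tr(Πσ))), where F is the generalized fidelity. In particular, combined with normalization this yields the bound used for smoothing: ‖√(ΠρΠ)√(ΠσΠ)‖₁ ≥ F(ρ,σ) − sqrt((1−Tr(Πρ))(1−Tr(Πσ))). -/

import Mathlib

open Matrix Kronecker ComplexOrder

noncomputable section

variable {n : Type*} [Fintype n] [DecidableEq n]

/-- The PSD square root `U √D Uᴴ` (Mathlib's former `Matrix.PosSemidef.sqrt`). -/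
def psdSqrtOld {A : Matrix n n ℂ} (hA : A.PosSemidef) : Matrix n n ℂ :=
  (hA.1.eigenvectorUnitary : Matrix n n ℂ) * diagonal ((↑) ∘ (√·) ∘ hA.1.eigenvalues) *
    (star (hA.1.eigenvectorUnitary : Matrix n n ℂ))

open Classical in
/-- The square root of a matrix: the PSD square root if the matrix is PSD, else 0. -/
def msqrt (A : Matrix n n ℂ) : Matrix n n ℂ :=
  if h : A.PosSemidef then psdSqrtOld h else 0

/-- The trace norm (Schatten 1-norm) of a matrix. -/
def trNorm (A : Matrix n n ℂ) : ℝ :=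
  ((psdSqrtOld (Matrix.posSemidef_conjTranspose_mul_self A)).trace).re

/-- The operator norm of a matrix, acting on the Euclidean space. -/
def opNorm (A : Matrix n n ℂ) : ℝ :=
  ‖(Matrix.toEuclideanCLM (𝕜 := ℂ) A : EuclideanSpace ℂ n →L[ℂ] EuclideanSpace ℂ n)‖

/-- A (normalized) quantum state: positive semidefinite with unit trace. -/
def IsState (ρ : Matrix n n ℂ) : Prop := ρ.PosSemidef ∧ ρ.trace = 1

/-- A subnormalized quantum state: positive semidefinite with trace at most one. -/
def IsSubState (ρ : Matrix n n ℂ) : Prop := ρ.PosSemidef ∧ (ρ.trace).re ≤ 1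

/-- Loewner (semidefinite) order: `A ≤ B` iff `B - A` is positive semidefinite. -/
def LoewnerLE (A B : Matrix n n ℂ) : Prop := (B - A).PosSemidef

/-- Fidelity `F(ρ,σ) = ‖√ρ√σ‖₁` (extended to positive operators). -/
def fid (ρ σ : Matrix n n ℂ) : ℝ := trNorm (msqrt ρ * msqrt σ)

/-- Generalized fidelity for subnormalized states. -/
def gFid (ρ σ : Matrix n n ℂ) : ℝ :=
  fid ρ σ + Real.sqrt ((1 - ρ.trace.re) * (1 - σ.trace.re))

/-- (Generalized) purified distance `P(ρ,σ) = sqrt(1 - F(ρ,σ)²)`. -/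
def pDist (ρ σ : Matrix n n ℂ) : ℝ := Real.sqrt (1 - (gFid ρ σ)^2)

/-- Generalized trace distance `δ(ρ,σ) = (‖ρ-σ‖₁ + |Tr(ρ-σ)|)/2` for subnormalized states. -/
def trDist (ρ σ : Matrix n n ℂ) : ℝ :=
  (trNorm (ρ - σ) + |(ρ.trace - σ.trace).re|) / 2

variable {α β γ : Type*} [Fintype α] [DecidableEq α] [Fintype β] [DecidableEq β]
  [Fintype γ] [DecidableEq γ]

/-- Partial trace over the second tensor factor. -/
def ptrSnd (ρ : Matrix (α × β) (α × β) ℂ) : Matrix α α ℂ :=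
  fun i j => ∑ k, ρ (i, k) (j, k)

/-- Partial trace over the first tensor factor. -/
def ptrFst (ρ : Matrix (α × β) (α × β) ℂ) : Matrix β β ℂ :=
  fun i j => ∑ k, ρ (k, i) (k, j)

/-- Partial trace over the middle factor of a tripartite system `(α × β) × γ`. -/
def ptrMid (ρ : Matrix ((α × β) × γ) ((α × β) × γ) ℂ) : Matrix (α × γ) (α × γ) ℂ :=
  fun p q => ∑ m, ρ ((p.1, m), p.2) ((q.1, m), q.2)

/-- Max-relative entropy `D_max(ρ‖σ) = inf {λ : ρ ≤ 2^λ σ}`. -/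
def Dmax (ρ σ : Matrix n n ℂ) : ℝ :=
  sInf {l : ℝ | LoewnerLE ρ (((2:ℝ) ^ l) • σ)}

open Classical in
/-- von Neumann entropy (base 2) of a matrix (0 if not Hermitian). -/
def vnEntropy (ρ : Matrix n n ℂ) : ℝ :=
  if h : ρ.IsHermitian then -∑ i, (h.eigenvalues i) * Real.logb 2 (h.eigenvalues i) else 0

/-! ### Auxiliary lemmas for Statement 17 -/

set_option linter.unusedSectionVars false

section Aux17

variable {n : Type*} [Fintype n] [DecidableEq n]

lemma msqrt_of_posSemidef {A : Matrix n n ℂ} (hA : A.PosSemidef) : msqrt A = psdSqrtOld hA :=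
  dif_pos hA

lemma msqrt_posSemidef {A : Matrix n n ℂ} (hA : A.PosSemidef) : (msqrt A).PosSemidef := by
  rw [msqrt_of_posSemidef hA]
  exact (Matrix.PosSemidef.diagonal
    (fun _ => Complex.zero_le_real.mpr (Real.sqrt_nonneg _))).mul_mul_conjTranspose_same _

lemma msqrt_mul_self {A : Matrix n n ℂ} (hA : A.PosSemidef) : msqrt A * msqrt A = A := by
  rw [msqrt_of_posSemidef hA]
  have hUU : star (hA.1.eigenvectorUnitary : Matrix n n ℂ) *
      (hA.1.eigenvectorUnitary : Matrix n n ℂ) = 1 := Matrix.UnitaryGroup.star_mul_self _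
  conv_rhs => rw [hA.1.spectral_theorem, Unitary.conjStarAlgAut_apply]
  unfold psdSqrtOld
  simp only [Matrix.mul_assoc]
  rw [← Matrix.mul_assoc (star _) _ , hUU, Matrix.one_mul,
    ← Matrix.mul_assoc (diagonal _) (diagonal _), diagonal_mul_diagonal]
  congr 3
  funext i
  simp only [Function.comp_apply]
  rw [← Complex.ofReal_mul, Real.mul_self_sqrt (hA.eigenvalues_nonneg i)]
  rfl

lemma msqrt_herm {A : Matrix n n ℂ} (hA : A.PosSemidef) : (msqrt A)ᴴ = msqrt A :=
  (msqrt_posSemidef hA).1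

lemma trNorm_def' (M : Matrix n n ℂ) : trNorm M = ((msqrt (Mᴴ * M)).trace).re := by
  rw [trNorm, msqrt_of_posSemidef (Matrix.posSemidef_conjTranspose_mul_self M)]

lemma psd_trace_re_nonneg {A : Matrix n n ℂ} (hA : A.PosSemidef) : 0 ≤ A.trace.re := by
  rw [Matrix.trace]
  have h : ∀ i, 0 ≤ (A i i).re := by
    intro i
    have := hA.re_dotProduct_nonneg (Pi.single i 1)
    simpa [dotProduct, Matrix.mulVec, Pi.single_apply] using this
  simpa [Matrix.diag] using Finset.sum_nonneg fun i _ => h i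

lemma herm_trace_im {A : Matrix n n ℂ} (hA : A.IsHermitian) : A.trace.im = 0 := by
  rw [Matrix.trace]
  have h : ∀ i, (A i i).im = 0 := by
    intro i
    have h1 := congrFun (congrFun hA i) i
    simp only [Matrix.conjTranspose_apply] at h1
    have h2 := congrArg Complex.im h1
    simp only [Complex.conj_im, RCLike.star_def] at h2
    linarith
  simp [Matrix.diag, Complex.im_sum, h]

lemma loewnerLE_trans {A B C : Matrix n n ℂ} (h1 : LoewnerLE A B) (h2 : LoewnerLE B C) :
    LoewnerLE A C := by
  have := h1.add h2
  unfold LoewnerLE at *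
  convert this using 1
  abel

lemma loewnerLE_conj {A B : Matrix n n ℂ} (h : LoewnerLE A B) (C : Matrix n n ℂ) :
    LoewnerLE (Cᴴ * A * C) (Cᴴ * B * C) := by
  unfold LoewnerLE at *
  have := h.conjTranspose_mul_mul_same C
  convert this using 1
  noncomm_ring

lemma trace_re_mono {A B : Matrix n n ℂ} (h : LoewnerLE A B) : A.trace.re ≤ B.trace.re := by
  have := psd_trace_re_nonneg h
  rw [Matrix.trace_sub, Complex.sub_re] at this
  linarith

lemma loewnerLE_one_of_idem {Z : Matrix n n ℂ} (hZ : Z.IsHermitian) (hidem : Z * Z = Z) :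
    LoewnerLE Z 1 := by
  unfold LoewnerLE
  have key : (1 - Z : Matrix n n ℂ) = (1 - Z)ᴴ * (1 - Z) := by
    rw [Matrix.conjTranspose_sub, Matrix.conjTranspose_one, hZ.eq]
    rw [Matrix.sub_mul, Matrix.mul_sub, Matrix.mul_sub, hidem]
    noncomm_ring
  rw [key]
  exact Matrix.posSemidef_conjTranspose_mul_self _

lemma trace_conj_self_re (A : Matrix n n ℂ) :
    (Aᴴ * A).trace.re = ∑ p : n × n, ‖A p.1 p.2‖ ^ 2 := by
  rw [Matrix.trace]
  simp only [Matrix.diag, Matrix.mul_apply, Matrix.conjTranspose_apply]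
  rw [Complex.re_sum, Fintype.sum_prod_type, Finset.sum_comm]
  refine Finset.sum_congr rfl fun k _ => ?_
  rw [Complex.re_sum]
  refine Finset.sum_congr rfl fun i _ => ?_
  rw [RCLike.star_def, ← Complex.normSq_eq_conj_mul_self, Complex.ofReal_re,
    ← Complex.sq_norm]

lemma trace_cauchy_schwarz (A B : Matrix n n ℂ) :
    ‖(Aᴴ * B).trace‖ ≤
      Real.sqrt ((Aᴴ * A).trace.re) * Real.sqrt ((Bᴴ * B).trace.re) := by
  classical
  let f : EuclideanSpace ℂ (n × n) := WithLp.toLp 2 (fun p : n × n => A p.1 p.2)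
  let g : EuclideanSpace ℂ (n × n) := WithLp.toLp 2 (fun p : n × n => B p.1 p.2)
  have hinner : (inner ℂ f g : ℂ) = (Aᴴ * B).trace := by
    rw [Matrix.trace]
    simp only [PiLp.inner_apply, RCLike.inner_apply, Matrix.diag, Matrix.mul_apply,
      Matrix.conjTranspose_apply]
    rw [Fintype.sum_prod_type, Finset.sum_comm]
    exact Finset.sum_congr rfl fun k _ => Finset.sum_congr rfl fun i _ => by
      simp [f, g, mul_comm, RCLike.star_def]
  have hnormA : ‖f‖ = Real.sqrt ((Aᴴ * A).trace.re) := by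
    rw [EuclideanSpace.norm_eq, trace_conj_self_re]
  have hnormB : ‖g‖ = Real.sqrt ((Bᴴ * B).trace.re) := by
    rw [EuclideanSpace.norm_eq, trace_conj_self_re]
  calc ‖(Aᴴ * B).trace‖ = ‖(inner ℂ f g : ℂ)‖ := by rw [hinner]
    _ ≤ ‖f‖ * ‖g‖ := norm_inner_le_norm f g
    _ = _ := by rw [hnormA, hnormB]

lemma abs_trace_contraction_psd {C P : Matrix n n ℂ} (hC : LoewnerLE (Cᴴ * C) 1)
    (hP : P.PosSemidef) : ‖(C * P).trace‖ ≤ P.trace.re := by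
  set S := msqrt P with hSdef
  have hSh : Sᴴ = S := msqrt_herm hP
  have hSS : S * S = P := msqrt_mul_self hP
  have htr : (C * P).trace = (Sᴴ * (C * S)).trace := by
    rw [hSh, ← hSS, ← Matrix.mul_assoc, Matrix.trace_mul_comm]
  have h1 : (Sᴴ * S).trace.re = P.trace.re := by rw [hSh, hSS]
  have h2 : ((C * S)ᴴ * (C * S)).trace.re ≤ P.trace.re := by
    have hle : LoewnerLE (Sᴴ * (Cᴴ * C) * S) (Sᴴ * 1 * S) := loewnerLE_conj hC S
    have he1 : (C * S)ᴴ * (C * S) = Sᴴ * (Cᴴ * C) * S := by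
      simp only [Matrix.conjTranspose_mul, Matrix.mul_assoc]
    have he2 : Sᴴ * 1 * S = P := by rw [Matrix.mul_one, hSh, hSS]
    rw [he1]
    have := trace_re_mono hle
    rwa [he2] at this
  calc ‖(C * P).trace‖ = ‖(Sᴴ * (C * S)).trace‖ := by rw [htr]
    _ ≤ Real.sqrt ((Sᴴ * S).trace.re) * Real.sqrt (((C * S)ᴴ * (C * S)).trace.re) :=
        trace_cauchy_schwarz _ _
    _ ≤ Real.sqrt (P.trace.re) * Real.sqrt (P.trace.re) :=
        mul_le_mul (Real.sqrt_le_sqrt (le_of_eq h1)) (Real.sqrt_le_sqrt h2)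
          (Real.sqrt_nonneg _) (Real.sqrt_nonneg _)
    _ = P.trace.re := Real.mul_self_sqrt (psd_trace_re_nonneg hP)

lemma polar_exists (X : Matrix n n ℂ) :
    ∃ W : Matrix n n ℂ, W * msqrt (Xᴴ * X) = X ∧ LoewnerLE (Wᴴ * W) 1 ∧
      LoewnerLE (W * Wᴴ) 1 ∧ (Wᴴ * X).trace = (msqrt (Xᴴ * X)).trace := by
  classical
  have hH : (Xᴴ * X).PosSemidef := Matrix.posSemidef_conjTranspose_mul_self X
  set H := Xᴴ * X with hHdef
  set U : Matrix n n ℂ := (hH.1.eigenvectorUnitary : Matrix n n ℂ) with hUdef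
  set ev : n → ℝ := hH.1.eigenvalues with hevdef
  have hevnn : ∀ i, 0 ≤ ev i := hH.eigenvalues_nonneg
  have hUU : star U * U = 1 := Matrix.UnitaryGroup.star_mul_self _
  have hUU' : U * star U = 1 := Matrix.mem_unitaryGroup_iff.mp hH.1.eigenvectorUnitary.2
  have hdiag : star U * H * U = Matrix.diagonal (fun i => (ev i : ℂ)) :=
    by
      have h := hH.1.conjStarAlgAut_star_eigenvectorUnitary
      rw [Unitary.conjStarAlgAut_star_apply] at h
      exact h
  have hspec : H = U * Matrix.diagonal (fun i => (ev i : ℂ)) * star U := hH.1.spectral_theorem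
  set s : n → ℂ := fun i => (Real.sqrt (ev i) : ℂ) with hsdef
  have hsq : msqrt H = U * Matrix.diagonal s * star U := by
    rw [msqrt_of_posSemidef hH]; rfl
  set d' : n → ℂ := fun i => if ev i = 0 then 0 else ((Real.sqrt (ev i))⁻¹ : ℝ) with hd'def
  set e : n → ℂ := fun i => if ev i = 0 then 0 else 1 with hedef
  have key : ∀ a b : n → ℂ, (U * Matrix.diagonal a * star U) * (U * Matrix.diagonal b * star U)
      = U * Matrix.diagonal (fun i => a i * b i) * star U := by
    intro a b
    calc (U * Matrix.diagonal a * star U) * (U * Matrix.diagonal b * star U)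
        = U * (Matrix.diagonal a * ((star U * U) * (Matrix.diagonal b * star U))) := by
          simp only [Matrix.mul_assoc]
      _ = U * (Matrix.diagonal a * (Matrix.diagonal b * star U)) := by
          rw [hUU, Matrix.one_mul]
      _ = U * (Matrix.diagonal (fun i => a i * b i) * star U) := by
          rw [← Matrix.mul_assoc (Matrix.diagonal a) (Matrix.diagonal b) (star U),
            Matrix.diagonal_mul_diagonal]
      _ = U * Matrix.diagonal (fun i => a i * b i) * star U := by
          rw [Matrix.mul_assoc]
  have trkey : ∀ a : n → ℂ, (U * Matrix.diagonal a * star U).trace = ∑ i, a i := by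
    intro a
    rw [Matrix.trace_mul_comm, ← Matrix.mul_assoc, hUU, Matrix.one_mul,
      Matrix.trace_diagonal]
  set T : Matrix n n ℂ := U * Matrix.diagonal d' * star U with hTdef
  set W : Matrix n n ℂ := X * T with hWdef
  have hd'star : star d' = d' := by
    funext i
    simp only [hd'def, Pi.star_apply]
    split_ifs <;> simp
  have hdstar : (Matrix.diagonal d')ᴴ = Matrix.diagonal d' := by
    rw [Matrix.diagonal_conjTranspose, hd'star]
  have hTh : Tᴴ = T := by
    rw [hTdef, Matrix.conjTranspose_mul, Matrix.conjTranspose_mul, hdstar,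
      Matrix.star_eq_conjTranspose, Matrix.conjTranspose_conjTranspose, Matrix.mul_assoc]
  -- entrywise identities
  have hds : ∀ i, d' i * s i = e i := by
    intro i
    by_cases h : ev i = 0
    · simp [hd'def, hsdef, hedef, h]
    · have hs0 : Real.sqrt (ev i) ≠ 0 := by
        rw [Real.sqrt_ne_zero']
        exact lt_of_le_of_ne (hevnn i) (Ne.symm h)
      simp only [hd'def, hsdef, hedef, if_neg h]
      norm_cast
      exact inv_mul_cancel₀ hs0
  have hsqrt_mul : ∀ i, Real.sqrt (ev i) * Real.sqrt (ev i) = ev i :=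
    fun i => Real.mul_self_sqrt (hevnn i)
  have hd'evd' : ∀ i, d' i * (ev i : ℂ) * d' i = e i := by
    intro i
    by_cases h : ev i = 0
    · simp [hd'def, hedef, h]
    · have hs0 : Real.sqrt (ev i) ≠ 0 := by
        rw [Real.sqrt_ne_zero']
        exact lt_of_le_of_ne (hevnn i) (Ne.symm h)
      simp only [hd'def, hedef, if_neg h]
      norm_cast
      rw [← hsqrt_mul i]
      field_simp
      rw [Real.sqrt_sq (Real.sqrt_nonneg _)]
  have hd2 : ∀ i, (d' i * d' i) * (ev i : ℂ) * (d' i * d' i) = d' i * d' i := by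
    intro i
    by_cases h : ev i = 0
    · simp [hd'def, h]
    · have hs0 : Real.sqrt (ev i) ≠ 0 := by
        rw [Real.sqrt_ne_zero']
        exact lt_of_le_of_ne (hevnn i) (Ne.symm h)
      simp only [hd'def, if_neg h]
      norm_cast
      rw [← hsqrt_mul i]
      field_simp
      rw [Real.sqrt_sq (Real.sqrt_nonneg _)]
  have hee : ∀ i, e i * e i = e i := by
    intro i
    by_cases h : ev i = 0 <;> simp [hedef, h]
  have hd'ev : ∀ i, d' i * (ev i : ℂ) = s i := by
    intro i
    by_cases h : ev i = 0
    · simp [hd'def, hsdef, h]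
    · have hs0 : Real.sqrt (ev i) ≠ 0 := by
        rw [Real.sqrt_ne_zero']
        exact lt_of_le_of_ne (hevnn i) (Ne.symm h)
      simp only [hd'def, hsdef, if_neg h]
      norm_cast
      rw [← hsqrt_mul i]
      field_simp
      rw [Real.sqrt_sq (Real.sqrt_nonneg _)]
  -- columns of X*U with zero eigenvalue vanish
  set M : Matrix n n ℂ := X * U with hMdef
  have hMM : Mᴴ * M = Matrix.diagonal (fun i => (ev i : ℂ)) := by
    rw [← hdiag, hMdef, hHdef, Matrix.star_eq_conjTranspose]
    simp only [Matrix.conjTranspose_mul, Matrix.mul_assoc]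
  have hMcol : ∀ i j, ev j = 0 → M i j = 0 := by
    intro i j hj
    have h1 : (Mᴴ * M) j j = 0 := by rw [hMM]; simp [hj]
    have h2 : ∑ k, Complex.normSq (M k j) = 0 := by
      have h3 := congrArg Complex.re h1
      rw [Matrix.mul_apply, Complex.re_sum] at h3
      simp only [Matrix.conjTranspose_apply, RCLike.star_def,
        ← Complex.normSq_eq_conj_mul_self, Complex.ofReal_re] at h3
      simpa using h3
    have h4 := (Finset.sum_eq_zero_iff_of_nonneg
      (fun k _ => Complex.normSq_nonneg (M k j))).mp h2 i (Finset.mem_univ i)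
    exact Complex.normSq_eq_zero.mp h4
  have hMe : M * Matrix.diagonal e = M := by
    ext i j
    rw [Matrix.mul_diagonal]
    by_cases h : ev j = 0
    · simp [hedef, h, hMcol i j h]
    · simp [hedef, h]
  -- claim 1 : W * msqrt H = X
  have claim1 : W * msqrt H = X := by
    rw [hsq, hWdef]
    calc X * T * (U * Matrix.diagonal s * star U)
        = X * (T * (U * Matrix.diagonal s * star U)) := by rw [Matrix.mul_assoc]
      _ = X * (U * Matrix.diagonal (fun i => d' i * s i) * star U) := by
          rw [hTdef, key]
      _ = X * (U * Matrix.diagonal e * star U) := by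
          congr 2
          exact congrArg (fun D => U * D) (congrArg Matrix.diagonal (funext hds))
      _ = (M * Matrix.diagonal e) * star U := by
          rw [hMdef]
          simp only [Matrix.mul_assoc]
      _ = M * star U := by rw [hMe]
      _ = X := by rw [hMdef, Matrix.mul_assoc, hUU', Matrix.mul_one]
  -- claim 2 : Wᴴ * W = U diag e star U, hence ≤ 1
  have hWhW : Wᴴ * W = U * Matrix.diagonal e * star U := by
    have h1 : Wᴴ * W = T * H * T := by
      rw [hWdef, Matrix.conjTranspose_mul, hTh, hHdef]
      noncomm_ring
    rw [h1, hspec, hTdef, key, key]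
    congr 2
    refine congrArg Matrix.diagonal (funext fun i => ?_)
    exact hd'evd' i
  have claim2 : LoewnerLE (Wᴴ * W) 1 := by
    apply loewnerLE_one_of_idem (Matrix.posSemidef_conjTranspose_mul_self W).1
    rw [hWhW, key]
    exact congrArg (fun D => U * D * star U) (congrArg Matrix.diagonal (funext hee))
  -- claim 3 : W * Wᴴ idempotent, hence ≤ 1
  have hTT : T * T = U * Matrix.diagonal (fun i => d' i * d' i) * star U := by
    rw [hTdef, key]
  have claim3 : LoewnerLE (W * Wᴴ) 1 := by
    apply loewnerLE_one_of_idem (Matrix.posSemidef_self_mul_conjTranspose W).1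
    have h1 : W * Wᴴ = X * (T * T) * Xᴴ := by
      rw [hWdef, Matrix.conjTranspose_mul, hTh]
      noncomm_ring
    have h2 : (T * T) * H * (T * T) = T * T := by
      rw [hTT, hspec, key, key]
      exact congrArg (fun D => U * D * star U) (congrArg Matrix.diagonal (funext hd2))
    calc W * Wᴴ * (W * Wᴴ) = X * ((T * T) * H * (T * T)) * Xᴴ := by
          rw [h1, hHdef]
          noncomm_ring
      _ = X * (T * T) * Xᴴ := by rw [h2]
      _ = W * Wᴴ := h1.symm
  -- claim 4 : trace
  have claim4 : (Wᴴ * X).trace = (msqrt H).trace := by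
    have h1 : Wᴴ * X = T * H := by
      rw [hWdef, Matrix.conjTranspose_mul, hTh, hHdef]
      noncomm_ring
    have h2 : T * H = U * Matrix.diagonal (fun i => d' i * (ev i : ℂ)) * star U := by
      rw [hspec, hTdef, key]
    rw [h1, h2, hsq, trkey, trkey]
    exact Finset.sum_congr rfl fun i _ => hd'ev i
  exact ⟨W, claim1, claim2, claim3, claim4⟩

lemma sqrt_cs_ineq {a b c d : ℝ} (ha : 0 ≤ a) (hb : 0 ≤ b) (hc : 0 ≤ c) (hd : 0 ≤ d) :
    Real.sqrt (a * b) + Real.sqrt (c * d) ≤ Real.sqrt ((a + c) * (b + d)) := by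
  rw [Real.sqrt_mul ha, Real.sqrt_mul hc]
  rw [show Real.sqrt ((a + c) * (b + d)) = Real.sqrt (a + c) * Real.sqrt (b + d) from
    Real.sqrt_mul (by linarith) _]
  have h1 := Real.sq_sqrt ha
  have h2 := Real.sq_sqrt hb
  have h3 := Real.sq_sqrt hc
  have h4 := Real.sq_sqrt hd
  have h5 := Real.sq_sqrt (show (0:ℝ) ≤ a + c by linarith)
  have h6 := Real.sq_sqrt (show (0:ℝ) ≤ b + d by linarith)
  nlinarith [Real.sqrt_nonneg a, Real.sqrt_nonneg b, Real.sqrt_nonneg c, Real.sqrt_nonneg d,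
    Real.sqrt_nonneg (a + c), Real.sqrt_nonneg (b + d),
    sq_nonneg (Real.sqrt a * Real.sqrt d - Real.sqrt c * Real.sqrt b),
    sq_nonneg (Real.sqrt a * Real.sqrt b + Real.sqrt c * Real.sqrt d
      - Real.sqrt (a + c) * Real.sqrt (b + d)),
    mul_nonneg (Real.sqrt_nonneg (a+c)) (Real.sqrt_nonneg (b+d))]

lemma abs_trace_le_trNorm {Q : Matrix n n ℂ} (M : Matrix n n ℂ)
    (hQ : LoewnerLE (Qᴴ * Q) 1) :
    ‖(Q * M).trace‖ ≤ trNorm M := by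
  obtain ⟨W, hW1, hW2, -, -⟩ := polar_exists M
  have hK : (Mᴴ * M).PosSemidef := Matrix.posSemidef_conjTranspose_mul_self M
  have hfact : Q * M = (Q * W) * msqrt (Mᴴ * M) := by rw [Matrix.mul_assoc, hW1]
  have hcontr : LoewnerLE ((Q * W)ᴴ * (Q * W)) 1 := by
    have h1 : LoewnerLE (Wᴴ * (Qᴴ * Q) * W) (Wᴴ * 1 * W) := loewnerLE_conj hQ W
    have h2 : (Q * W)ᴴ * (Q * W) = Wᴴ * (Qᴴ * Q) * W := by
      simp only [Matrix.conjTranspose_mul, Matrix.mul_assoc]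
    rw [Matrix.mul_one] at h1
    rw [h2]
    exact loewnerLE_trans h1 hW2
  rw [trNorm_def', hfact]
  exact abs_trace_contraction_psd hcontr (msqrt_posSemidef hK)

end Aux17

set_option maxHeartbeats 1000000 in
/-- Generalized fidelity does not decrease under projections:
`F(ΠρΠ, ΠσΠ) ≥ F(ρ,σ) − sqrt((1−Tr(Πρ))(1−Tr(Πσ)))`, the left side being the ordinary
fidelity `‖√(ΠρΠ)√(ΠσΠ)‖₁` of the projected operators and `F(ρ,σ)` the generalized
fidelity. -/
theorem fid_proj_ge_gFid_sub {d : ℕ}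
    (ρ σ Pj : Matrix (Fin d) (Fin d) ℂ) (hρ : IsSubState ρ) (hσ : IsSubState σ)
    (hproj : Pj * Pj = Pj) (hherm : Pjᴴ = Pj) :
    fid (Pj * ρ * Pj) (Pj * σ * Pj) ≥
      gFid ρ σ - Real.sqrt ((1 - ((Pj * ρ).trace).re) * (1 - ((Pj * σ).trace).re)) := by
  obtain ⟨hρp, hρt⟩ := hρ
  obtain ⟨hσp, hσt⟩ := hσ
  -- complement projection facts
  have hQh : (1 - Pj)ᴴ = 1 - Pj := by
    rw [Matrix.conjTranspose_sub, Matrix.conjTranspose_one, hherm]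
  have hQQ : (1 - Pj) * (1 - Pj) = 1 - Pj := by
    have h : (1 - Pj) * (1 - Pj) = 1 - Pj - Pj + Pj * Pj := by noncomm_ring
    rw [h, hproj]
    abel
  -- polar decomposition of X = √ρ √σ
  obtain ⟨W, hW1, hW2, hW3, hW4⟩ := polar_exists (msqrt ρ * msqrt σ)
  -- polar decompositions of Y = √ρ Pj and Z = √σ Pj
  have hYY : (msqrt ρ * Pj)ᴴ * (msqrt ρ * Pj) = Pj * ρ * Pj := by
    rw [Matrix.conjTranspose_mul, hherm, msqrt_herm hρp]
    calc Pj * msqrt ρ * (msqrt ρ * Pj) = Pj * (msqrt ρ * msqrt ρ) * Pj := by noncomm_ring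
      _ = Pj * ρ * Pj := by rw [msqrt_mul_self hρp]
  have hZZ : (msqrt σ * Pj)ᴴ * (msqrt σ * Pj) = Pj * σ * Pj := by
    rw [Matrix.conjTranspose_mul, hherm, msqrt_herm hσp]
    calc Pj * msqrt σ * (msqrt σ * Pj) = Pj * (msqrt σ * msqrt σ) * Pj := by noncomm_ring
      _ = Pj * σ * Pj := by rw [msqrt_mul_self hσp]
  have psdρ' : (Pj * ρ * Pj).PosSemidef :=
    hYY ▸ Matrix.posSemidef_conjTranspose_mul_self (msqrt ρ * Pj)
  have psdσ' : (Pj * σ * Pj).PosSemidef :=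
    hZZ ▸ Matrix.posSemidef_conjTranspose_mul_self (msqrt σ * Pj)
  obtain ⟨V, hV1, hV2, hV3, -⟩ := polar_exists (msqrt ρ * Pj)
  obtain ⟨R, hR1, hR2, hR3, -⟩ := polar_exists (msqrt σ * Pj)
  rw [hYY] at hV1
  rw [hZZ] at hR1
  -- hV1 : V * msqrt (Pj*ρ*Pj) = msqrt ρ * Pj, hR1 : R * msqrt (Pj*σ*Pj) = msqrt σ * Pj
  have hZRh : msqrt (Pj * σ * Pj) * Rᴴ = Pj * msqrt σ := by
    have h := congrArg Matrix.conjTranspose hR1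
    rw [Matrix.conjTranspose_mul, Matrix.conjTranspose_mul, msqrt_herm psdσ', hherm,
      msqrt_herm hσp] at h
    exact h
  -- split the fidelity trace
  have hsplit : fid ρ σ = ((Wᴴ * msqrt ρ * Pj * msqrt σ).trace).re
      + ((Wᴴ * msqrt ρ * (1 - Pj) * msqrt σ).trace).re := by
    have hfidW : fid ρ σ = ((Wᴴ * (msqrt ρ * msqrt σ)).trace).re := by
      show trNorm (msqrt ρ * msqrt σ) = _
      rw [trNorm_def', ← hW4]
    have hdecomp : Wᴴ * (msqrt ρ * msqrt σ)
        = Wᴴ * msqrt ρ * Pj * msqrt σ + Wᴴ * msqrt ρ * (1 - Pj) * msqrt σ := by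
      noncomm_ring
    rw [hfidW, hdecomp, Matrix.trace_add, Complex.add_re]
  -- main term is at most the projected fidelity
  have hQc : LoewnerLE ((Rᴴ * Wᴴ * V)ᴴ * (Rᴴ * Wᴴ * V)) 1 := by
    have e1 : (Rᴴ * Wᴴ * V)ᴴ * (Rᴴ * Wᴴ * V) = (Wᴴ * V)ᴴ * (R * Rᴴ) * (Wᴴ * V) := by
      simp only [Matrix.conjTranspose_mul, Matrix.conjTranspose_conjTranspose,
        Matrix.mul_assoc]
    have h1 := loewnerLE_conj hR3 (Wᴴ * V)
    rw [Matrix.mul_one] at h1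
    have e2 : (Wᴴ * V)ᴴ * (Wᴴ * V) = Vᴴ * (W * Wᴴ) * V := by
      simp only [Matrix.conjTranspose_mul, Matrix.conjTranspose_conjTranspose,
        Matrix.mul_assoc]
    rw [e2] at h1
    have h2 := loewnerLE_conj hW3 V
    rw [Matrix.mul_one] at h2
    rw [e1]
    exact loewnerLE_trans (loewnerLE_trans h1 h2) hV2
  have hmain_le : ((Wᴴ * msqrt ρ * Pj * msqrt σ).trace).re
      ≤ fid (Pj * ρ * Pj) (Pj * σ * Pj) := by
    have heq : ((Rᴴ * Wᴴ * V) * (msqrt (Pj * ρ * Pj) * msqrt (Pj * σ * Pj))).trace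
        = (Wᴴ * msqrt ρ * Pj * msqrt σ).trace := by
      have e1 : (Rᴴ * Wᴴ * V) * (msqrt (Pj * ρ * Pj) * msqrt (Pj * σ * Pj))
          = Rᴴ * (Wᴴ * (V * msqrt (Pj * ρ * Pj)) * msqrt (Pj * σ * Pj)) := by
        noncomm_ring
      rw [e1, hV1, Matrix.trace_mul_comm]
      have e2 : Wᴴ * (msqrt ρ * Pj) * msqrt (Pj * σ * Pj) * Rᴴ
          = Wᴴ * (msqrt ρ * Pj) * (msqrt (Pj * σ * Pj) * Rᴴ) := by
        noncomm_ring
      rw [e2, hZRh]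
      have e3 : Wᴴ * (msqrt ρ * Pj) * (Pj * msqrt σ)
          = Wᴴ * msqrt ρ * (Pj * Pj) * msqrt σ := by noncomm_ring
      rw [e3, hproj]
    have habs := abs_trace_le_trNorm (msqrt (Pj * ρ * Pj) * msqrt (Pj * σ * Pj)) hQc
    rw [heq] at habs
    calc ((Wᴴ * msqrt ρ * Pj * msqrt σ).trace).re
        ≤ |((Wᴴ * msqrt ρ * Pj * msqrt σ).trace).re| := le_abs_self _
      _ ≤ ‖(Wᴴ * msqrt ρ * Pj * msqrt σ).trace‖ := Complex.abs_re_le_norm _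
      _ ≤ trNorm (msqrt (Pj * ρ * Pj) * msqrt (Pj * σ * Pj)) := habs
      _ = fid (Pj * ρ * Pj) (Pj * σ * Pj) := rfl
  -- penalty term bound
  have hpen1 : Wᴴ * msqrt ρ * (1 - Pj) * msqrt σ
      = (Wᴴ * msqrt ρ * (1 - Pj)) * ((1 - Pj) * msqrt σ) := by
    calc Wᴴ * msqrt ρ * (1 - Pj) * msqrt σ
        = Wᴴ * msqrt ρ * ((1 - Pj) * (1 - Pj)) * msqrt σ := by rw [hQQ]
      _ = (Wᴴ * msqrt ρ * (1 - Pj)) * ((1 - Pj) * msqrt σ) := by noncomm_ring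
  have hpen2 : ((1 - Pj) * msqrt σ) * (Wᴴ * msqrt ρ * (1 - Pj))
      = (W * (msqrt σ * (1 - Pj)))ᴴ * (msqrt ρ * (1 - Pj)) := by
    simp only [Matrix.conjTranspose_mul, hQh, msqrt_herm hσp, Matrix.mul_assoc]
  have hpen_tr : (Wᴴ * msqrt ρ * (1 - Pj) * msqrt σ).trace
      = ((W * (msqrt σ * (1 - Pj)))ᴴ * (msqrt ρ * (1 - Pj))).trace := by
    rw [hpen1, Matrix.trace_mul_comm, hpen2]
  have hAA : ((W * (msqrt σ * (1 - Pj)))ᴴ * (W * (msqrt σ * (1 - Pj)))).trace.re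
      ≤ ((1 - Pj) * σ * (1 - Pj)).trace.re := by
    have h1 : LoewnerLE ((msqrt σ * (1 - Pj))ᴴ * (Wᴴ * W) * (msqrt σ * (1 - Pj)))
        ((msqrt σ * (1 - Pj))ᴴ * 1 * (msqrt σ * (1 - Pj))) := loewnerLE_conj hW2 _
    have e1 : (W * (msqrt σ * (1 - Pj)))ᴴ * (W * (msqrt σ * (1 - Pj)))
        = (msqrt σ * (1 - Pj))ᴴ * (Wᴴ * W) * (msqrt σ * (1 - Pj)) := by
      simp only [Matrix.conjTranspose_mul, Matrix.mul_assoc]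
    have e2 : (msqrt σ * (1 - Pj))ᴴ * 1 * (msqrt σ * (1 - Pj))
        = (1 - Pj) * σ * (1 - Pj) := by
      rw [Matrix.mul_one, Matrix.conjTranspose_mul, hQh, msqrt_herm hσp]
      calc (1 - Pj) * msqrt σ * (msqrt σ * (1 - Pj))
          = (1 - Pj) * (msqrt σ * msqrt σ) * (1 - Pj) := by noncomm_ring
        _ = (1 - Pj) * σ * (1 - Pj) := by rw [msqrt_mul_self hσp]
    rw [e1]
    have h2 := trace_re_mono h1
    rwa [e2] at h2
  have hBB : (msqrt ρ * (1 - Pj))ᴴ * (msqrt ρ * (1 - Pj)) = (1 - Pj) * ρ * (1 - Pj) := by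
    rw [Matrix.conjTranspose_mul, hQh, msqrt_herm hρp]
    calc (1 - Pj) * msqrt ρ * (msqrt ρ * (1 - Pj))
        = (1 - Pj) * (msqrt ρ * msqrt ρ) * (1 - Pj) := by noncomm_ring
      _ = (1 - Pj) * ρ * (1 - Pj) := by rw [msqrt_mul_self hρp]
  -- the complement traces
  have psdQρQ : ((1 - Pj) * ρ * (1 - Pj)).PosSemidef := by
    have := hρp.conjTranspose_mul_mul_same (1 - Pj)
    rwa [hQh] at this
  have psdQσQ : ((1 - Pj) * σ * (1 - Pj)).PosSemidef := by
    have := hσp.conjTranspose_mul_mul_same (1 - Pj)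
    rwa [hQh] at this
  have hvalρ : ((1 - Pj) * ρ * (1 - Pj)).trace = ρ.trace - (Pj * ρ).trace := by
    have h1 : ((1 - Pj) * ρ * (1 - Pj)).trace = ((1 - Pj) * ρ).trace := by
      rw [Matrix.trace_mul_comm, ← Matrix.mul_assoc, hQQ]
    rw [h1, Matrix.sub_mul, Matrix.one_mul, Matrix.trace_sub]
  have hvalσ : ((1 - Pj) * σ * (1 - Pj)).trace = σ.trace - (Pj * σ).trace := by
    have h1 : ((1 - Pj) * σ * (1 - Pj)).trace = ((1 - Pj) * σ).trace := by
      rw [Matrix.trace_mul_comm, ← Matrix.mul_assoc, hQQ]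
    rw [h1, Matrix.sub_mul, Matrix.one_mul, Matrix.trace_sub]
  have hrρ : ((1 - Pj) * ρ * (1 - Pj)).trace.re = ρ.trace.re - ((Pj * ρ).trace).re := by
    rw [hvalρ, Complex.sub_re]
  have hrσ : ((1 - Pj) * σ * (1 - Pj)).trace.re = σ.trace.re - ((Pj * σ).trace).re := by
    rw [hvalσ, Complex.sub_re]
  have hrρ0 : 0 ≤ ((1 - Pj) * ρ * (1 - Pj)).trace.re := psd_trace_re_nonneg psdQρQ
  have hrσ0 : 0 ≤ ((1 - Pj) * σ * (1 - Pj)).trace.re := psd_trace_re_nonneg psdQσQ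
  -- penalty bound via Cauchy-Schwarz
  have hpen_bound : |((Wᴴ * msqrt ρ * (1 - Pj) * msqrt σ).trace).re|
      ≤ Real.sqrt (((1 - Pj) * ρ * (1 - Pj)).trace.re
          * ((1 - Pj) * σ * (1 - Pj)).trace.re) := by
    have hcs2 := trace_cauchy_schwarz (W * (msqrt σ * (1 - Pj))) (msqrt ρ * (1 - Pj))
    have hstep : Real.sqrt (((W * (msqrt σ * (1 - Pj)))ᴴ * (W * (msqrt σ * (1 - Pj)))).trace.re)
          * Real.sqrt (((msqrt ρ * (1 - Pj))ᴴ * (msqrt ρ * (1 - Pj))).trace.re)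
        ≤ Real.sqrt (((1 - Pj) * σ * (1 - Pj)).trace.re)
          * Real.sqrt (((1 - Pj) * ρ * (1 - Pj)).trace.re) :=
      mul_le_mul (Real.sqrt_le_sqrt hAA)
        (le_of_eq (congrArg Real.sqrt (congrArg Complex.re (congrArg Matrix.trace hBB))))
        (Real.sqrt_nonneg _) (Real.sqrt_nonneg _)
    have s1 : |((Wᴴ * msqrt ρ * (1 - Pj) * msqrt σ).trace).re|
        ≤ ‖(Wᴴ * msqrt ρ * (1 - Pj) * msqrt σ).trace‖ := Complex.abs_re_le_norm _
    have s2 : ‖(Wᴴ * msqrt ρ * (1 - Pj) * msqrt σ).trace‖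
        = ‖((W * (msqrt σ * (1 - Pj)))ᴴ * (msqrt ρ * (1 - Pj))).trace‖ :=
      congrArg (‖·‖) hpen_tr
    have s5 : Real.sqrt (((1 - Pj) * σ * (1 - Pj)).trace.re)
          * Real.sqrt (((1 - Pj) * ρ * (1 - Pj)).trace.re)
        = Real.sqrt (((1 - Pj) * ρ * (1 - Pj)).trace.re
          * ((1 - Pj) * σ * (1 - Pj)).trace.re) := by
      rw [Real.sqrt_mul hrρ0, mul_comm]
    linarith [hcs2, hstep]
  -- scalar Cauchy-Schwarz combination
  have hcs := sqrt_cs_ineq (a := 1 - ρ.trace.re) (b := 1 - σ.trace.re)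
    (c := ((1 - Pj) * ρ * (1 - Pj)).trace.re) (d := ((1 - Pj) * σ * (1 - Pj)).trace.re)
    (by linarith) (by linarith) hrρ0 hrσ0
  have harg : ((1 - ρ.trace.re) + ((1 - Pj) * ρ * (1 - Pj)).trace.re)
      * ((1 - σ.trace.re) + ((1 - Pj) * σ * (1 - Pj)).trace.re)
      = (1 - ((Pj * ρ).trace).re) * (1 - ((Pj * σ).trace).re) := by
    rw [hrρ, hrσ]; ring
  rw [harg] at hcs
  rw [ge_iff_le, gFid]
  have hneg := le_abs_self ((Wᴴ * msqrt ρ * (1 - Pj) * msqrt σ).trace).re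
  linarith
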